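/- Fix ℓ > 0 and an even integer m ≥ 2 with ℓπm/√2 ≥ 1. Then Σ_{k=m/2+1}^{∞} k² e^{−2π²k²ℓ²} ≤ ∫_{m/2}^{∞} x² e^{−2π²x²ℓ²} dx = (1/√(2π)) · erfc(πℓm/√2)/(8π²ℓ³) + (m/(8π²ℓ²)) e^{−π²ℓ²m²/2}, where erfc(x) := 1 − (2/√π) ∫₀^x e^{−t²} dt. -/

import Mathlib

open MeasureTheory Real

noncomputable section

/-- The complementary error function `erfc(x) = 1 − (2/√π) ∫₀^x e^{−t²} dt`. -/
def erfc (x : ℝ) : ℝ := 1 - (2 / Real.sqrt π) * ∫ t in (0:ℝ)..x, Real.exp (-t ^ 2)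

open Set Filter Topology in
lemma gauss_sq_integrable {c : ℝ} (hc : 0 < c) :
    Integrable (fun x : ℝ => x ^ 2 * Real.exp (-(c * x ^ 2))) := by
  have h := integrable_rpow_mul_exp_neg_mul_sq hc (by norm_num : (-1:ℝ) < 2)
  refine h.congr (Filter.Eventually.of_forall fun x => ?_)
  have hx : x ^ (2:ℝ) = x ^ (2:ℕ) := by
    rw [show ((2:ℝ)) = ((2:ℕ):ℝ) by norm_num, Real.rpow_natCast]
  simp only [hx, neg_mul]

open Set Filter Topology in
lemma gauss_tail_aux {c : ℝ} (hc : 0 < c) (a : ℝ) :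
    ∫ x in Set.Ioi a, x ^ 2 * Real.exp (-(c * x ^ 2)) =
      (1 / (2 * c)) * (Real.sqrt (π / c) / 2 - ∫ t in (0:ℝ)..a, Real.exp (-(c * t ^ 2)))
        + (a / (2 * c)) * Real.exp (-(c * a ^ 2)) := by
  have hcont : Continuous fun t : ℝ => Real.exp (-(c * t ^ 2)) := by fun_prop
  have hexp : ∀ x : ℝ, HasDerivAt (fun y => Real.exp (-(c * y ^ 2)))
      (-(2 * c * x) * Real.exp (-(c * x ^ 2))) x := by
    intro x
    have h := (((hasDerivAt_pow 2 x).const_mul c).fun_neg).exp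
    convert h using 1
    simp only [Nat.cast_ofNat, pow_one]
    ring
  set F : ℝ → ℝ := fun x => -(x / (2 * c)) * Real.exp (-(c * x ^ 2))
      + (1 / (2 * c)) * ∫ t in (0:ℝ)..x, Real.exp (-(c * t ^ 2)) with hF
  have hFd : ∀ x : ℝ, HasDerivAt F (x ^ 2 * Real.exp (-(c * x ^ 2))) x := by
    intro x
    have h1 : HasDerivAt (fun y : ℝ => -(y / (2 * c)))  (-(1 / (2 * c))) x := by
      simpa using ((hasDerivAt_id x).div_const (2 * c)).fun_neg
    have h2 := (h1.fun_mul (hexp x))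
    have h3 : HasDerivAt (fun y : ℝ => ∫ t in (0:ℝ)..y, Real.exp (-(c * t ^ 2)))
        (Real.exp (-(c * x ^ 2))) x :=
      intervalIntegral.integral_hasDerivAt_right (hcont.intervalIntegrable _ _)
        hcont.stronglyMeasurable.stronglyMeasurableAtFilter hcont.continuousAt
    have h4 := h2.fun_add (h3.const_mul (1 / (2 * c)))
    refine h4.congr_deriv ?_
    field_simp
    ring
  have hint : Integrable (fun x : ℝ => x ^ 2 * Real.exp (-(c * x ^ 2))) :=
    gauss_sq_integrable hc
  have hT1 : Tendsto (fun x : ℝ => -(x / (2 * c)) * Real.exp (-(c * x ^ 2))) atTop (𝓝 0) := by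
    have ho := rpow_mul_exp_neg_mul_sq_isLittleO_exp_neg hc 1
    have hz : Tendsto (fun x : ℝ => Real.exp (-(1/2) * x)) atTop (𝓝 0) := by
      have h : Tendsto (fun x : ℝ => (1/2 : ℝ) * x) atTop atTop :=
        Tendsto.const_mul_atTop (by norm_num) tendsto_id
      have hcomp := Real.tendsto_exp_neg_atTop_nhds_zero.comp h
      refine hcomp.congr fun x => ?_
      simp [Function.comp, neg_mul]
    have h0 : Tendsto (fun x : ℝ => x ^ (1:ℝ) * Real.exp (-c * x ^ 2)) atTop (𝓝 0) :=
      ho.tendsto_zero_of_tendsto hz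
    have := (h0.const_mul (-(1 / (2 * c))))
    rw [mul_zero] at this
    refine this.congr' ?_
    filter_upwards [eventually_gt_atTop (0:ℝ)] with x hx
    rw [Real.rpow_one]
    ring_nf
  have hT2 : Tendsto (fun x : ℝ => ∫ t in (0:ℝ)..x, Real.exp (-(c * t ^ 2))) atTop
      (𝓝 (Real.sqrt (π / c) / 2)) := by
    have hI : IntegrableOn (fun t : ℝ => Real.exp (-(c * t ^ 2))) (Set.Ioi 0) := by
      have := (integrable_exp_neg_mul_sq hc).integrableOn (s := Set.Ioi 0)
      refine this.congr_fun (fun x _ => by simp only [neg_mul]) measurableSet_Ioi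
    have h := intervalIntegral_tendsto_integral_Ioi 0 hI tendsto_id
    have heq : ∫ t in Set.Ioi (0:ℝ), Real.exp (-(c * t ^ 2)) = Real.sqrt (π / c) / 2 := by
      rw [← integral_gaussian_Ioi c]
      exact setIntegral_congr_fun measurableSet_Ioi (fun x _ => by rw [neg_mul])
    rwa [heq] at h
  have hFlim : Tendsto F atTop (𝓝 (0 + (1 / (2 * c)) * (Real.sqrt (π / c) / 2))) :=
    hT1.add (hT2.const_mul _)
  have := integral_Ioi_of_hasDerivAt_of_tendsto' (a := a) (fun x _ => hFd x)
    hint.integrableOn hFlim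
  rw [this]
  simp only [hF]
  ring

/-- Tail estimate: for even `m ≥ 2` with `ℓπm/√2 ≥ 1`,
`Σ_{k=m/2+1}^{∞} k² e^{−2π²k²ℓ²} ≤ ∫_{m/2}^{∞} x² e^{−2π²x²ℓ²} dx
  = (1/√(2π)) erfc(πℓm/√2)/(8π²ℓ³) + (m/(8π²ℓ²)) e^{−π²ℓ²m²/2}`. -/
theorem tail_second_moment_sum (ℓ : ℝ) (hℓ : 0 < ℓ) (m : ℕ) (hm : Even m) (hm2 : 2 ≤ m)
    (hη : 1 ≤ ℓ * π * m / Real.sqrt 2) :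
    (∑' n : ℕ, ((m / 2 + 1 + n : ℕ) : ℝ) ^ 2 *
        Real.exp (-(2 * π ^ 2 * ((m / 2 + 1 + n : ℕ) : ℝ) ^ 2 * ℓ ^ 2))) ≤
      (∫ x in Set.Ioi ((m : ℝ) / 2), x ^ 2 * Real.exp (-(2 * π ^ 2 * x ^ 2 * ℓ ^ 2))) ∧
    (∫ x in Set.Ioi ((m : ℝ) / 2), x ^ 2 * Real.exp (-(2 * π ^ 2 * x ^ 2 * ℓ ^ 2))) =
      (1 / Real.sqrt (2 * π)) * (erfc (π * ℓ * m / Real.sqrt 2) / (8 * π ^ 2 * ℓ ^ 3)) +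
        (m / (8 * π ^ 2 * ℓ ^ 2)) * Real.exp (-(π ^ 2 * ℓ ^ 2 * m ^ 2 / 2)) := by
  have hπ := Real.pi_pos
  set c : ℝ := 2 * π ^ 2 * ℓ ^ 2 with hc_def
  have hc : 0 < c := by positivity
  have hExp : ∀ x : ℝ, 2 * π ^ 2 * x ^ 2 * ℓ ^ 2 = c * x ^ 2 := fun x => by rw [hc_def]; ring
  set a : ℝ := (m:ℝ)/2 with ha_def
  have hm2' : (2:ℝ) ≤ (m:ℝ) := by exact_mod_cast hm2
  have ha1 : 1 ≤ a := by rw [ha_def]; linarith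
  have hs2 : Real.sqrt 2 ^ 2 = 2 := Real.sq_sqrt (by norm_num)
  have hs2pos : 0 < Real.sqrt 2 := Real.sqrt_pos.mpr (by norm_num)
  have hca : 1 ≤ c * a ^ 2 := by
    have h2 : (1:ℝ) ≤ (ℓ * π * m / Real.sqrt 2) ^ 2 := by nlinarith
    have h3 : (ℓ * π * (m:ℝ) / Real.sqrt 2) ^ 2 = c * a ^ 2 := by
      rw [hc_def, ha_def, div_pow, hs2]; ring
    linarith [h3 ▸ h2]
  have key : ∀ x y : ℝ, a ≤ x → x ≤ y →
      y ^ 2 * Real.exp (-(c * y ^ 2)) ≤ x ^ 2 * Real.exp (-(c * x ^ 2)) := by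
    intro x y hax hxy
    have hx0 : 0 < x := lt_of_lt_of_le (by linarith) hax
    have hax2 : a ^ 2 ≤ x ^ 2 := by nlinarith
    have hcx : 1 ≤ c * x ^ 2 := le_trans hca (mul_le_mul_of_nonneg_left hax2 hc.le)
    have hxy2 : x ^ 2 ≤ y ^ 2 := by nlinarith
    have hexp1 : 1 + c * (y^2 - x^2) ≤ Real.exp (c * (y^2 - x^2)) := by
      have := Real.add_one_le_exp (c * (y^2 - x^2)); linarith
    have hkey : y ^ 2 ≤ x ^ 2 * Real.exp (c * (y^2 - x^2)) := by
      nlinarith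
    calc y ^ 2 * Real.exp (-(c * y ^ 2))
        ≤ (x ^ 2 * Real.exp (c * (y^2 - x^2))) * Real.exp (-(c * y^2)) :=
          mul_le_mul_of_nonneg_right hkey (Real.exp_pos _).le
      _ = x ^ 2 * Real.exp (-(c * x ^ 2)) := by
          rw [mul_assoc, ← Real.exp_add]; congr 1; ring
  simp only [hExp]
  constructor
  · obtain ⟨j, hj⟩ := hm
    have hj2 : m / 2 = j := by omega
    have hcast : ∀ n : ℕ, ((m / 2 + 1 + n : ℕ) : ℝ) = a + ((n + 1 : ℕ) : ℝ) := by
      intro n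
      rw [hj2, ha_def, hj]
      push_cast
      ring
    apply Real.tsum_le_of_sum_range_le
    · intro n; positivity
    · intro N
      have hanti : AntitoneOn (fun x : ℝ => x ^ 2 * Real.exp (-(c * x ^ 2)))
          (Set.Icc a (a + N)) := fun x hx y hy hxy => key x y hx.1 hxy
      have h1 := hanti.sum_le_integral
      have h2 : (∫ x in a..(a + (N:ℕ)), x ^ 2 * Real.exp (-(c * x ^ 2))) ≤
          ∫ x in Set.Ioi a, x ^ 2 * Real.exp (-(c * x ^ 2)) := by
        rw [intervalIntegral.integral_of_le (le_add_of_nonneg_right (Nat.cast_nonneg N))]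
        refine setIntegral_mono_set (gauss_sq_integrable hc).integrableOn
          (ae_of_all _ fun x => by positivity) ?_
        exact HasSubset.Subset.eventuallyLE Set.Ioc_subset_Ioi_self
      refine le_trans (le_of_eq ?_) (h1.trans h2)
      exact Finset.sum_congr rfl fun n _ => by rw [hcast n]
  · rw [gauss_tail_aux hc a]
    set s2 := Real.sqrt 2 with hs2def
    set sπ := Real.sqrt π with hsπdef
    have hsπ : sπ ^ 2 = π := Real.sq_sqrt hπ.le
    have hsπpos : 0 < sπ := Real.sqrt_pos.mpr hπ
    have hsc : Real.sqrt (π / c) = sπ / (s2 * π * ℓ) := by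
      rw [Real.sqrt_div hπ.le, ← hsπdef]
      congr 1
      rw [show c = (s2 * π * ℓ) ^ 2 by rw [hc_def]; linear_combination (-(π^2 * ℓ^2)) * hs2]
      exact Real.sqrt_sq (by positivity)
    have hz : π * ℓ * (m:ℝ) / s2 = (s2 * π * ℓ) * a := by
      rw [ha_def, div_eq_iff hs2pos.ne']
      linear_combination (-(π * ℓ * (m:ℝ)) / 2) * hs2
    have hsub : (∫ t in (0:ℝ)..a, Real.exp (-(c * t ^ 2))) =
        (s2 * π * ℓ)⁻¹ * ∫ t in (0:ℝ)..((s2 * π * ℓ) * a), Real.exp (-t ^ 2) := by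
      have hne : (s2 * π * ℓ) ≠ 0 := by positivity
      have h1 : Set.EqOn (fun u : ℝ => Real.exp (-(c * u ^ 2)))
          (fun u : ℝ => (fun t : ℝ => Real.exp (-t ^ 2)) ((s2 * π * ℓ) * u)) (Set.uIcc 0 a) := by
        intro u _
        simp only
        congr 1
        rw [hc_def]
        linear_combination (π^2 * ℓ^2 * u^2) * hs2
      calc (∫ t in (0:ℝ)..a, Real.exp (-(c * t ^ 2)))
          = ∫ x in (0:ℝ)..a, (fun t : ℝ => Real.exp (-t ^ 2)) ((s2 * π * ℓ) * x) :=
            intervalIntegral.integral_congr h1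
        _ = (s2 * π * ℓ)⁻¹ • ∫ t in (s2 * π * ℓ * 0)..(s2 * π * ℓ * a), Real.exp (-t ^ 2) :=
            intervalIntegral.integral_comp_mul_left (fun t : ℝ => Real.exp (-t ^ 2)) hne
        _ = (s2 * π * ℓ)⁻¹ * ∫ t in (0:ℝ)..((s2 * π * ℓ) * a), Real.exp (-t ^ 2) := by
            rw [mul_zero, smul_eq_mul]
    have hE : Real.exp (-(c * a ^ 2)) = Real.exp (-(π ^ 2 * ℓ ^ 2 * (m:ℝ) ^ 2 / 2)) := by
      congr 1; rw [hc_def, ha_def]; ring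
    rw [hz, hsub, hsc, hE, Real.sqrt_mul (by norm_num : (0:ℝ) ≤ 2) π, ← hs2def, ← hsπdef]
    simp only [erfc, ← hsπdef]
    set I := ∫ t in (0:ℝ)..((s2 * π * ℓ) * a), Real.exp (-t ^ 2) with hIdef
    rw [hc_def, ha_def]
    rw [show π = sπ ^ 2 from hsπ.symm]
    field_simp
    ring

end
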